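/- For every regular language L, if sc(L) = n then sc(root(L)) ≤ n^n. -/
import Mathlib


/-- `root L` = words some positive power of which lies in `L`. -/
def root {A : Type} (L : Language A) : Language A :=
  {w | ∃ m : ℕ, 1 ≤ m ∧ (List.replicate m w).flatten ∈ L}

/-- A language is regular if some DFA with finitely many states recognizes it. -/
def IsReg {A : Type} (L : Language A) : Prop :=
  ∃ (σ : Type) (_ : Fintype σ) (M : DFA A σ), M.accepts = L

/-- The state complexity of a language: the least number of states of a DFA recognizing it. -/
noncomputable def sc {A : Type} (L : Language A) : ℕ :=
  sInf {m | ∃ (σ : Type) (_ : Fintype σ) (M : DFA A σ), M.accepts = L ∧ Fintype.card σ = m}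

/-- The "transition monoid" DFA recognizing `root` of `M.accepts`. -/
def rootDFA {A σ : Type} (M : DFA A σ) : DFA A (σ → σ) where
  step f a := fun q => M.step (f q) a
  start := id
  accept := {f | ∃ m : ℕ, 1 ≤ m ∧ f^[m] M.start ∈ M.accept}

lemma rootDFA_evalFrom {A σ : Type} (M : DFA A σ) (w : List A) (f : σ → σ) :
    (rootDFA M).evalFrom f w = fun q => M.evalFrom (f q) w := by
  induction w generalizing f with
  | nil => rfl
  | cons a w ih =>
      simp only [DFA.evalFrom, List.foldl_cons] at *
      rw [ih]
      rfl

lemma evalFrom_replicate {A σ : Type} (M : DFA A σ) (w : List A) (m : ℕ) (q : σ) :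
    M.evalFrom q (List.replicate m w).flatten = (fun p => M.evalFrom p w)^[m] q := by
  induction m generalizing q with
  | zero => rfl
  | succ m ih =>
      rw [List.replicate_succ, List.flatten_cons, Function.iterate_succ_apply]
      rw [DFA.evalFrom_of_append] at *
      · exact ih _
      
lemma rootDFA_accepts {A σ : Type} (M : DFA A σ) :
    (rootDFA M).accepts = root M.accepts := by
  ext w
  have h1 : (rootDFA M).evalFrom (rootDFA M).start w = fun q => M.evalFrom q w :=
    rootDFA_evalFrom M w id
  constructor
  · rintro ⟨m, hm, hmem⟩
    · exact ⟨m, hm, by rw [DFA.mem_accepts, DFA.eval, evalFrom_replicate]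
                       rw [h1] at hmem; exact hmem⟩
  · rintro ⟨m, hm, hmem⟩
    refine ⟨m, hm, ?_⟩
    rw [DFA.mem_accepts, DFA.eval, evalFrom_replicate] at hmem
    rw [h1]; exact hmem

theorem corollary_1_2 {A : Type} (L : Language A) (n : ℕ)
    (hreg : IsReg L) (hsc : sc L = n) :
    sc (root L) ≤ n ^ n := by
  obtain ⟨σ, hσ, M, hM⟩ := hreg
  have hne : {m | ∃ (σ : Type) (_ : Fintype σ) (M : DFA A σ), M.accepts = L ∧ Fintype.card σ = m}.Nonempty :=
    ⟨Fintype.card σ, σ, hσ, M, hM, rfl⟩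
  have hmem := Nat.sInf_mem hne
  rw [show sInf {m | ∃ (σ : Type) (_ : Fintype σ) (M : DFA A σ), M.accepts = L ∧ Fintype.card σ = m} = sc L from rfl, hsc] at hmem
  obtain ⟨τ, hτ, N, hN, hcard⟩ := hmem
  letI := hτ
  letI := Classical.decEq τ
  have : sc (root L) ≤ Fintype.card (τ → τ) := by
    apply Nat.sInf_le
    exact ⟨τ → τ, inferInstance, rootDFA N, by rw [rootDFA_accepts, hN], rfl⟩
  calc sc (root L) ≤ Fintype.card (τ → τ) := this
    _ = n ^ n := by rw [Fintype.card_fun, hcard]
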